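/- arXiv:1703.00591 — 5 statements merged into one kernel-verified Lean document; each statement's English description precedes it below -/
import Mathlib

section
/- Suppose each A_i = diag(A_i^{(11)},…,A_i^{(tt)}) with A_i^{(jj)} ∈ ℝ^{n_j×n_j}, and let 𝒜_j = {A_i^{(jj)}}_{i=1}^m. If dim 𝒩(𝒜_j) = 1, then 𝒜_j cannot be further block diagonalized. -/
open Matrix BigOperators Kronecker
open scoped ENNReal

namespace JBD

/-- Index type for `τ_n`-block partitioned `n×n` matrices, where the partition
`τ_n = (n 0, …, n (t-1))`. -/
abbrev BlkIdx {t : ℕ} (n : Fin t → ℕ) := Σ j : Fin t, Fin (n j)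

variable {t : ℕ} {n : Fin t → ℕ}

/-- The `τ_n`-block diagonal part `Bdiag_{τ_n}(A)`. -/
def bdiag (A : Matrix (BlkIdx n) (BlkIdx n) ℝ) : Matrix (BlkIdx n) (BlkIdx n) ℝ :=
  fun p q => if p.1 = q.1 then A p q else 0

/-- The `τ_n`-off-block diagonal part `OffBdiag_{τ_n}(A)`. -/
def offBdiag (A : Matrix (BlkIdx n) (BlkIdx n) ℝ) : Matrix (BlkIdx n) (BlkIdx n) ℝ :=
  A - bdiag A

/-- `A ∈ 𝔻_{τ_n}`, i.e. `A` is `τ_n`-block diagonal. -/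
def IsBlockDiag (A : Matrix (BlkIdx n) (BlkIdx n) ℝ) : Prop :=
  ∀ p q : BlkIdx n, p.1 ≠ q.1 → A p q = 0

/-- `P` is a permutation matrix. -/
def IsPermMatrix {I : Type*} [DecidableEq I] [Fintype I] (P : Matrix I I ℝ) : Prop :=
  ∃ σ : Equiv.Perm I, P = σ.permMatrix ℝ

/-- `P ∈ ℙ_{τ_n}`: a `τ_n`-block diagonal preserving permutation matrix. -/
def IsBDPerm (P : Matrix (BlkIdx n) (BlkIdx n) ℝ) : Prop :=
  IsPermMatrix P ∧
    ∀ D : Matrix (BlkIdx n) (BlkIdx n) ℝ, IsBlockDiag D → IsBlockDiag (Pᵀ * D * P)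

/-- `W ∈ 𝕎_{τ_n}`: nonsingular with `Bdiag_{τ_n}(Wᵀ W) = I`. -/
def MemW (W : Matrix (BlkIdx n) (BlkIdx n) ℝ) : Prop :=
  IsUnit W ∧ bdiag (Wᵀ * W) = 1

/-- `W` is a `τ_n`-block diagonalizer of the matrix set `𝒜 = {A i}`. -/
def IsDiagonalizer {m : ℕ} (A : Fin m → Matrix (BlkIdx n) (BlkIdx n) ℝ)
    (W : Matrix (BlkIdx n) (BlkIdx n) ℝ) : Prop :=
  IsUnit W ∧ ∀ i, IsBlockDiag (Wᵀ * A i * W)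

/-- The JBDP for `𝒜` is uniquely `τ_n`-block diagonalizable. -/
def UniquelyBD {m : ℕ} (A : Fin m → Matrix (BlkIdx n) (BlkIdx n) ℝ) : Prop :=
  (∃ W, IsDiagonalizer A W) ∧
    ∀ W W', IsDiagonalizer A W → IsDiagonalizer A W' →
      ∃ D P : Matrix (BlkIdx n) (BlkIdx n) ℝ,
        IsBlockDiag D ∧ IsUnit D ∧ IsBDPerm P ∧ W' = W * D * P

/-- The `j`-th diagonal block of a `τ_n`-partitioned matrix. -/
def dblock (A : Matrix (BlkIdx n) (BlkIdx n) ℝ) (j : Fin t) :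
    Matrix (Fin (n j)) (Fin (n j)) ℝ := fun x y => A ⟨j, x⟩ ⟨j, y⟩

/-- A family `B = {B i}` of `N×N` matrices can be (further) simultaneously block
diagonalized by congruence, with respect to some partition of `N` of cardinality `≥ 2`. -/
def CanSplit {N m : ℕ} (B : Fin m → Matrix (Fin N) (Fin N) ℝ) : Prop :=
  ∃ (s : ℕ) (k : Fin s → ℕ), 2 ≤ s ∧ (∀ j, 0 < k j) ∧ (∑ j, k j) = N ∧
    ∃ (e : Fin N ≃ BlkIdx k) (V : Matrix (Fin N) (Fin N) ℝ), IsUnit V ∧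
      ∀ i, IsBlockDiag (Matrix.reindex e e (Vᵀ * B i * V))

/-- The subspace `𝒩(ℬ) = {Z : B i * Z - Zᵀ * B i = 0 for all i}`. -/
def nSubmodule {m : ℕ} {I : Type*} [Fintype I] (B : Fin m → Matrix I I ℝ) :
    Submodule ℝ (Matrix I I ℝ) where
  carrier := {Z | ∀ i, B i * Z - Zᵀ * B i = 0}
  add_mem' := by
    intro a b ha hb i
    have h1 := ha i
    have h2 := hb i
    have : (B i * a - aᵀ * B i) + (B i * b - bᵀ * B i) = 0 := by rw [h1, h2, add_zero]
    calc B i * (a + b) - (a + b)ᵀ * B i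
        = (B i * a - aᵀ * B i) + (B i * b - bᵀ * B i) := by
          rw [Matrix.mul_add, Matrix.transpose_add, Matrix.add_mul]; abel
      _ = 0 := this
  zero_mem' := by intro i; simp
  smul_mem' := by
    intro c Z hZ i
    have h := hZ i
    calc B i * (c • Z) - (c • Z)ᵀ * B i = c • (B i * Z - Zᵀ * B i) := by
          rw [Matrix.mul_smul, Matrix.transpose_smul, Matrix.smul_mul, smul_sub]
      _ = 0 := by rw [h, smul_zero]

/-- Frobenius norm. -/
noncomputable def frob {I J : Type*} [Fintype I] [Fintype J] (A : Matrix I J ℝ) : ℝ :=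
  Real.sqrt (∑ i, ∑ j, (A i j) ^ 2)

/-- Spectral norm (operator 2-norm). -/
noncomputable def spec {I : Type*} [Fintype I] [DecidableEq I] (A : Matrix I I ℝ) : ℝ :=
  ‖Matrix.toEuclideanCLM (𝕜 := ℝ) A‖

/-- Singular values of a real matrix: square roots of the eigenvalues of `Aᵀ * A`
(one for each column index). -/
noncomputable def sv {I J : Type*} [Fintype I] [Fintype J] [DecidableEq J]
    (A : Matrix I J ℝ) (k : J) : ℝ :=
  Real.sqrt ((Matrix.isHermitian_conjTranspose_mul_self A).eigenvalues k)

/-- The smallest singular value. -/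
noncomputable def sigmaMin {I J : Type*} [Fintype I] [Fintype J] [DecidableEq J]
    (A : Matrix I J ℝ) : ℝ :=
  ⨅ k : J, sv A k

/-- The smallest nonzero singular value. -/
noncomputable def minNonzeroSV {I J : Type*} [Fintype I] [Fintype J] [DecidableEq J]
    (A : Matrix I J ℝ) : ℝ :=
  sInf {s | (∃ k, sv A k = s) ∧ s ≠ 0}

/-- The list of singular values sorted in increasing order. -/
noncomputable def svSorted {I J : Type*} [Fintype I] [Fintype J] [DecidableEq J]
    (A : Matrix I J ℝ) : List ℝ :=
  (Finset.univ.val.map (sv A)).sort (· ≤ ·)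

/-- The second smallest singular value. -/
noncomputable def secondSmallestSV {I J : Type*} [Fintype I] [Fintype J] [DecidableEq J]
    (A : Matrix I J ℝ) : ℝ :=
  (svSorted A).getD 1 0

/-- The matrix `G_{jk}` (for `j < k`), built from the diagonal blocks
`Aj i = A_i^{(jj)}` (size `a`) and `Ak i = A_i^{(kk)}` (size `b`). -/
noncomputable def Gjk {m a b : ℕ} (Aj : Fin m → Matrix (Fin a) (Fin a) ℝ)
    (Ak : Fin m → Matrix (Fin b) (Fin b) ℝ) :
    Matrix (Fin m × ((Fin b × Fin a) ⊕ (Fin b × Fin a))) ((Fin b × Fin a) ⊕ (Fin b × Fin a)) ℝ :=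
  fun r c =>
    Matrix.fromBlocks
      ((1 : Matrix (Fin b) (Fin b) ℝ) ⊗ₖ Aj r.1) ((Ak r.1)ᵀ ⊗ₖ (1 : Matrix (Fin a) (Fin a) ℝ))
      ((1 : Matrix (Fin b) (Fin b) ℝ) ⊗ₖ (Aj r.1)ᵀ) (Ak r.1 ⊗ₖ (1 : Matrix (Fin a) (Fin a) ℝ))
      r.2 c

/-- Column-major vectorization: `vecM Z (c, r) = Z r c`. -/
def vecM {a b : ℕ} (Z : Matrix (Fin a) (Fin b) ℝ) : Fin b × Fin a → ℝ :=
  fun p => Z p.2 p.1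

/-- The perfect-shuffle permutation matrix `Π_j`, satisfying
`shuffle a *ᵥ vecM Zᵀ = vecM Z`. -/
def shuffle (a : ℕ) : Matrix (Fin a × Fin a) (Fin a × Fin a) ℝ :=
  fun p q => if q = p.swap then 1 else 0

/-- The matrix `G_{jj}`, built from the diagonal blocks `Aj i = A_i^{(jj)}` (size `a`):
its `i`-th block row is `I ⊗ Aj i - ((Aj i)ᵀ ⊗ I) * Π_j`. -/
noncomputable def Gjj {m a : ℕ} (Aj : Fin m → Matrix (Fin a) (Fin a) ℝ) :
    Matrix (Fin m × (Fin a × Fin a)) (Fin a × Fin a) ℝ :=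
  fun r c =>
    ((1 : Matrix (Fin a) (Fin a) ℝ) ⊗ₖ Aj r.1
      - ((Aj r.1)ᵀ ⊗ₖ (1 : Matrix (Fin a) (Fin a) ℝ)) * shuffle a) r.2 c

/-- The matrix `M_{jk}` from Theorem 2.1, `M_{jk} = G_{jk}ᵀ G_{jk}`. -/
noncomputable def Mjk {m a b : ℕ} (Aj : Fin m → Matrix (Fin a) (Fin a) ℝ)
    (Ak : Fin m → Matrix (Fin b) (Fin b) ℝ) :
    Matrix ((Fin b × Fin a) ⊕ (Fin b × Fin a)) ((Fin b × Fin a) ⊕ (Fin b × Fin a)) ℝ :=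
  ∑ i, Matrix.fromBlocks
    ((1 : Matrix (Fin b) (Fin b) ℝ) ⊗ₖ ((Aj i)ᵀ * Aj i + Aj i * (Aj i)ᵀ))
    (Ak i ⊗ₖ Aj i + (Ak i)ᵀ ⊗ₖ (Aj i)ᵀ)
    (Ak i ⊗ₖ Aj i + (Ak i)ᵀ ⊗ₖ (Aj i)ᵀ)
    (((Ak i)ᵀ * Ak i + Ak i * (Ak i)ᵀ) ⊗ₖ (1 : Matrix (Fin a) (Fin a) ℝ))

/-- The modulus of uniqueness `ω_uniq = min_{j<k} σ_min(G_{jk})`, in terms of the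
family of diagonal blocks `Ab j i = A_i^{(jj)}`. -/
noncomputable def omegaUniq {m : ℕ}
    (Ab : ∀ j : Fin t, Fin m → Matrix (Fin (n j)) (Fin (n j)) ℝ) : ℝ :=
  ⨅ p : {p : Fin t × Fin t // p.1 < p.2}, sigmaMin (Gjk (Ab p.1.1) (Ab p.1.2))

/-- The modulus of non-divisibility `ω_rob` (`+∞` when `τ_n = (1,…,1)`), in terms of
the family of diagonal blocks `Ab j i = A_i^{(jj)}`. -/
noncomputable def omegaRob {m : ℕ}
    (Ab : ∀ j : Fin t, Fin m → Matrix (Fin (n j)) (Fin (n j)) ℝ) : ℝ≥0∞ :=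
  ⨅ (j : Fin t) (_ : 1 < n j), ENNReal.ofReal (minNonzeroSV (Gjj (Ab j)))

/-- The matrix `Γ = diag(γ_1 I_{n_1}, …, γ_t I_{n_t})`. -/
def gmat (γ : Fin t → ℝ) : Matrix (BlkIdx n) (BlkIdx n) ℝ :=
  Matrix.diagonal (fun p => γ p.1)

/-- The gap `g = min_{j ≠ k} |γ_j - γ_k|`. -/
noncomputable def gammaGap (γ : Fin t → ℝ) : ℝ :=
  ⨅ p : {p : Fin t × Fin t // p.1 ≠ p.2}, |γ p.1.1 - γ p.1.2|

/-- The multiset of complex eigenvalues (with algebraic multiplicity) of a real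
square matrix: the roots of its characteristic polynomial over `ℂ`. -/
noncomputable def eigMultiset {I : Type*} [Fintype I] [DecidableEq I]
    (Z : Matrix I I ℝ) : Multiset ℂ :=
  (Z.map (Complex.ofReal)).charpoly.roots

/-- The `j`-th block column of `P`, with its `j`-th (diagonal) block replaced by `0`:
the matrix `P̂_j`. -/
def hatColumn (P : Matrix (BlkIdx n) (BlkIdx n) ℝ) (j : Fin t) :
    Matrix (BlkIdx n) (Fin (n j)) ℝ :=
  fun p y => if p.1 = j then 0 else P p ⟨j, y⟩


/-- Theorem 2.2(c): if `dim 𝒩(𝒜_j) = 1` then `𝒜_j` cannot be further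
block diagonalized. -/
theorem not_canSplit_of_finrank_nSubmodule_eq_one {m N : ℕ} (hN : 0 < N)
    (B : Fin m → Matrix (Fin N) (Fin N) ℝ)
    (hdim : Module.finrank ℝ (nSubmodule B) = 1) :
    ¬ CanSplit B := by
  rintro ⟨s, k, hs, hk, hsum, e, V, hV, hbd⟩
  have hVdet : IsUnit V.det := (Matrix.isUnit_iff_isUnit_det V).mp hV
  have hVtdet : IsUnit (Vᵀ).det := by rwa [Matrix.det_transpose]
  have hVinv : V * V⁻¹ = 1 := Matrix.mul_nonsing_inv V hVdet
  have hinvV : V⁻¹ * V = 1 := Matrix.nonsing_inv_mul V hVdet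
  have htinv : (Vᵀ)⁻¹ * Vᵀ = 1 := Matrix.nonsing_inv_mul Vᵀ hVtdet
  have hC : ∀ i (x y : Fin N), (e x).1 ≠ (e y).1 → (Vᵀ * B i * V) x y = 0 := by
    intro i x y hxy
    have := hbd i (e x) (e y) hxy
    simpa using this
  set d : Fin s → Fin N → ℝ := fun j0 x => if (e x).1 = j0 then 1 else 0 with hd
  set E : Fin s → Matrix (Fin N) (Fin N) ℝ := fun j0 => Matrix.diagonal (d j0) with hE
  have hcomm : ∀ j0 i, (Vᵀ * B i * V) * E j0 = E j0 * (Vᵀ * B i * V) := by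
    intro j0 i
    ext x y
    rw [hE]
    rw [Matrix.mul_diagonal, Matrix.diagonal_mul]
    by_cases h : (e x).1 = (e y).1
    · simp [hd, h, mul_comm]
    · rw [hC i x y h]; ring
  set Z : Fin s → Matrix (Fin N) (Fin N) ℝ := fun j0 => V * E j0 * V⁻¹ with hZ
  have hZt : ∀ j0, (Z j0)ᵀ = (Vᵀ)⁻¹ * E j0 * Vᵀ := by
    intro j0
    rw [hZ]
    simp [Matrix.transpose_mul, Matrix.transpose_nonsing_inv, hE,
      Matrix.diagonal_transpose, Matrix.mul_assoc]
  have hmem : ∀ j0, Z j0 ∈ nSubmodule B := by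
    intro j0 i
    have h1 : (Vᵀ)⁻¹ * ((Vᵀ * B i * V) * E j0) * V⁻¹ = B i * Z j0 := by
      rw [hZ]
      simp only [← Matrix.mul_assoc]
      rw [htinv, Matrix.one_mul]
    have h2 : (Vᵀ)⁻¹ * (E j0 * (Vᵀ * B i * V)) * V⁻¹ = (Z j0)ᵀ * B i := by
      rw [hZt]
      simp only [Matrix.mul_assoc, hVinv, Matrix.mul_one]
    rw [← h1, ← h2, hcomm j0 i, sub_self]
  have hconj : ∀ j0, V⁻¹ * Z j0 * V = E j0 := by
    intro j0
    rw [hZ]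
    simp only [← Matrix.mul_assoc]
    rw [hinvV, Matrix.one_mul, Matrix.mul_assoc, hinvV, Matrix.mul_one]
  have h0s : 0 < s := by omega
  have h1s : 1 < s := hs
  set j0 : Fin s := ⟨0, h0s⟩ with hj0
  set j1 : Fin s := ⟨1, h1s⟩ with hj1
  have hj01 : j0 ≠ j1 := by
    intro h
    have := congrArg Fin.val h
    simp [hj0, hj1] at this
  have key : ∀ a b : ℝ, a • Z j0 + b • Z j1 = 0 → a = 0 ∧ b = 0 := by
    intro a b hab
    have hE0 : a • E j0 + b • E j1 = 0 := by
      have h := congrArg (fun X => V⁻¹ * X * V) hab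
      simp only [Matrix.mul_add, Matrix.add_mul, Matrix.mul_smul, Matrix.smul_mul,
        Matrix.mul_zero, Matrix.zero_mul] at h
      rw [hconj j0, hconj j1] at h
      exact h
    constructor
    · have x0 := e.symm ⟨j0, ⟨0, hk j0⟩⟩
      have h0 := congrFun (congrFun hE0 (e.symm ⟨j0, ⟨0, hk j0⟩⟩)) (e.symm ⟨j0, ⟨0, hk j0⟩⟩)
      simp [hE, hd, Matrix.diagonal, Equiv.apply_symm_apply, hj01] at h0
      exact h0
    · have h0 := congrFun (congrFun hE0 (e.symm ⟨j1, ⟨0, hk j1⟩⟩)) (e.symm ⟨j1, ⟨0, hk j1⟩⟩)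
      simp [hE, hd, Matrix.diagonal, Equiv.apply_symm_apply, Ne.symm hj01] at h0
      exact h0
  have li : LinearIndependent ℝ
      ![(⟨Z j0, hmem j0⟩ : nSubmodule B), (⟨Z j1, hmem j1⟩ : nSubmodule B)] := by
    rw [LinearIndependent.pair_iff]
    intro a b hab
    apply key a b
    have := congrArg (Subtype.val) hab
    simpa using this
  have hle := li.fintype_card_le_finrank
  simp [hdim] at hle

end JBD
end

section
/- Let W̃ ∈ ℝ^{n×n} be nonsingular, Ã_i ∈ ℝ^{n×n} for 1 ≤ i ≤ m, Γ = diag(γ_1 I_{n_1},…,γ_t I_{n_t}) with distinct real γ_1,…,γ_t, g = min_{j≠k} |γ_j − γ_k|, R̃_i = W̃ᵀ Ã_i W̃ Γ − Γ W̃ᵀ Ã_i W̃, and r̃ = (Σ_{i=1}^m ‖R̃_i‖_F²)^{1/2}. Then there exist matrices E_1,…,E_m ∈ ℝ^{n×n} such that W̃ᵀ (Ã_i + E_i) W̃ is τ_n-block diagonal for every i, and (Σ_{i=1}^m ‖E_i‖_F²)^{1/2} ≤ ‖W̃^{−1}‖₂² · r̃ / g. -/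
open Matrix BigOperators Kronecker
open scoped ENNReal

namespace JBD

variable {t : ℕ} {n : Fin t → ℕ}

section AuxNorm
open scoped Matrix.Norms.L2Operator

lemma frob_nonneg' {I J : Type*} [Fintype I] [Fintype J] (A : Matrix I J ℝ) : 0 ≤ frob A :=
  Real.sqrt_nonneg _

lemma frob_sq' {I J : Type*} [Fintype I] [Fintype J] (A : Matrix I J ℝ) :
    frob A ^ 2 = ∑ i, ∑ j, (A i j) ^ 2 :=
  Real.sq_sqrt (Finset.sum_nonneg fun _ _ => Finset.sum_nonneg fun _ _ => sq_nonneg _)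

lemma spec_eq_norm' {I : Type*} [Fintype I] [DecidableEq I] (A : Matrix I I ℝ) :
    spec A = ‖A‖ := rfl

lemma spec_nonneg' {I : Type*} [Fintype I] [DecidableEq I] (A : Matrix I I ℝ) :
    0 ≤ spec A := norm_nonneg _

lemma spec_transpose' {I : Type*} [Fintype I] [DecidableEq I] (A : Matrix I I ℝ) :
    spec Aᵀ = spec A := by
  have h : Aᵀ = Aᴴ := by ext i j; simp [Matrix.conjTranspose_apply]
  rw [spec_eq_norm', spec_eq_norm', h, Matrix.l2_opNorm_conjTranspose]

lemma frob_transpose' {I J : Type*} [Fintype I] [Fintype J] (A : Matrix I J ℝ) :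
    frob Aᵀ = frob A := by
  unfold frob
  rw [Finset.sum_comm]
  rfl

lemma frob_neg' {I J : Type*} [Fintype I] [Fintype J] (A : Matrix I J ℝ) :
    frob (-A) = frob A := by
  simp [frob, neg_sq]

lemma frob_mul_le' {I J : Type*} [Fintype I] [DecidableEq I] [Fintype J]
    (A : Matrix I I ℝ) (B : Matrix I J ℝ) :
    frob (A * B) ≤ spec A * frob B := by
  have hc : 0 ≤ spec A * frob B := mul_nonneg (spec_nonneg' A) (frob_nonneg' B)
  have key2 : ∀ j, ∑ i, ((A * B) i j) ^ 2 ≤ spec A ^ 2 * ∑ i, (B i j) ^ 2 := by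
    intro j
    set x : EuclideanSpace ℝ I := (EuclideanSpace.equiv I ℝ).symm (fun i => B i j) with hx
    have h1 := Matrix.l2_opNorm_mulVec (𝕜 := ℝ) A x
    have h2 : ‖(EuclideanSpace.equiv I ℝ).symm (A *ᵥ x)‖ ^ 2 ≤ (‖A‖ * ‖x‖) ^ 2 :=
      pow_le_pow_left₀ (norm_nonneg _) h1 2
    have h3 : ‖(EuclideanSpace.equiv I ℝ).symm (A *ᵥ x)‖ ^ 2 = ∑ i, ((A * B) i j) ^ 2 := by
      rw [EuclideanSpace.norm_eq, Real.sq_sqrt (Finset.sum_nonneg fun _ _ => sq_nonneg _)]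
      apply Finset.sum_congr rfl
      intro i _
      simp [Matrix.mul_apply, Matrix.mulVec, dotProduct, Real.norm_eq_abs, sq_abs, hx]
    have h4 : ‖x‖ ^ 2 = ∑ i, (B i j) ^ 2 := by
      rw [EuclideanSpace.norm_eq, Real.sq_sqrt (Finset.sum_nonneg fun _ _ => sq_nonneg _)]
      apply Finset.sum_congr rfl
      intro i _
      simp [Real.norm_eq_abs, sq_abs, hx]
    calc ∑ i, ((A * B) i j) ^ 2 = ‖(EuclideanSpace.equiv I ℝ).symm (A *ᵥ x)‖ ^ 2 := h3.symm
      _ ≤ (‖A‖ * ‖x‖) ^ 2 := h2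
      _ = spec A ^ 2 * ∑ i, (B i j) ^ 2 := by rw [mul_pow, h4]; rfl
  have key : frob (A * B) ^ 2 ≤ (spec A * frob B) ^ 2 := by
    rw [frob_sq', mul_pow, frob_sq']
    calc ∑ i, ∑ j, ((A * B) i j) ^ 2 = ∑ j, ∑ i, ((A * B) i j) ^ 2 := Finset.sum_comm
      _ ≤ ∑ j, spec A ^ 2 * ∑ i, (B i j) ^ 2 := Finset.sum_le_sum fun j _ => key2 j
      _ = spec A ^ 2 * ∑ j, ∑ i, (B i j) ^ 2 := (Finset.mul_sum _ _ _).symm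
      _ = spec A ^ 2 * ∑ i, ∑ j, (B i j) ^ 2 := by rw [Finset.sum_comm]
  calc frob (A * B) = Real.sqrt (frob (A * B) ^ 2) := (Real.sqrt_sq (frob_nonneg' _)).symm
    _ ≤ Real.sqrt ((spec A * frob B) ^ 2) := Real.sqrt_le_sqrt key
    _ = spec A * frob B := Real.sqrt_sq hc

lemma mul_frob_le' {I J : Type*} [Fintype I] [DecidableEq I] [Fintype J]
    (B : Matrix J I ℝ) (A : Matrix I I ℝ) :
    frob (B * A) ≤ frob B * spec A := by
  rw [← frob_transpose' (B * A), Matrix.transpose_mul]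
  calc frob (Aᵀ * Bᵀ) ≤ spec Aᵀ * frob Bᵀ := frob_mul_le' _ _
    _ = frob B * spec A := by rw [spec_transpose', frob_transpose']; ring

end AuxNorm

/-- Proposition 3.2: backward error. `W̃` exactly block diagonalizes the
perturbed set `{Ã_i + E_i}` with `(Σ ‖E_i‖_F²)^{1/2} ≤ ‖W̃⁻¹‖₂² r̃ / g`. -/
theorem backward_error {t m : ℕ} {n : Fin t → ℕ} (hn : ∀ j, 0 < n j)
    (Wt : Matrix (BlkIdx n) (BlkIdx n) ℝ) (hWt : IsUnit Wt)
    (At : Fin m → Matrix (BlkIdx n) (BlkIdx n) ℝ)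
    (γ : Fin t → ℝ) (hγ : Function.Injective γ)
    (g : ℝ) (hg : g = gammaGap γ)
    (Rt : Fin m → Matrix (BlkIdx n) (BlkIdx n) ℝ)
    (hRt : ∀ i, Rt i = Wtᵀ * At i * Wt * gmat γ - gmat γ * (Wtᵀ * At i * Wt))
    (r : ℝ) (hr : r = Real.sqrt (∑ i, frob (Rt i) ^ 2)) :
    ∃ E : Fin m → Matrix (BlkIdx n) (BlkIdx n) ℝ,
      (∀ i, IsBlockDiag (Wtᵀ * (At i + E i) * Wt)) ∧
      Real.sqrt (∑ i, frob (E i) ^ 2) ≤ spec Wt⁻¹ ^ 2 * r / g := by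
  classical
  have hdet : IsUnit Wt.det := (Matrix.isUnit_iff_isUnit_det Wt).mp hWt
  have hinv : Wt⁻¹ * Wt = 1 := Matrix.nonsing_inv_mul Wt hdet
  set B : Fin m → Matrix (BlkIdx n) (BlkIdx n) ℝ := fun i => Wtᵀ * At i * Wt with hB
  refine ⟨fun i => -((Wt⁻¹)ᵀ * offBdiag (B i) * Wt⁻¹), ?_, ?_⟩
  · intro i
    have h2 : Wtᵀ * (Wt⁻¹)ᵀ = 1 := by
      rw [← Matrix.transpose_mul, hinv, Matrix.transpose_one]
    have hcalc : Wtᵀ * (At i + -((Wt⁻¹)ᵀ * offBdiag (B i) * Wt⁻¹)) * Wt = bdiag (B i) := by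
      have e1 : Wtᵀ * (At i + -((Wt⁻¹)ᵀ * offBdiag (B i) * Wt⁻¹)) * Wt
          = B i - (Wtᵀ * (Wt⁻¹)ᵀ) * offBdiag (B i) * (Wt⁻¹ * Wt) := by
        rw [hB]; noncomm_ring
      rw [e1, h2, hinv, Matrix.one_mul, Matrix.mul_one, offBdiag, sub_sub_cancel]
    rw [hcalc]
    intro p q hpq
    simp [bdiag, hpq]
  · by_cases hne : Nonempty {p : Fin t × Fin t // p.1 ≠ p.2}
    · have hbdd : BddBelow (Set.range fun p : {p : Fin t × Fin t // p.1 ≠ p.2} =>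
          |γ p.1.1 - γ p.1.2|) := Set.Finite.bddBelow (Set.finite_range _)
      have hgle : ∀ (j k : Fin t), j ≠ k → g ≤ |γ j - γ k| := by
        intro j k h
        rw [hg, gammaGap]
        exact ciInf_le hbdd ⟨(j, k), h⟩
      have hgpos : 0 < g := by
        obtain ⟨p0, hp0⟩ := Finite.exists_min
          (fun p : {p : Fin t × Fin t // p.1 ≠ p.2} => |γ p.1.1 - γ p.1.2|)
        have hlt : (0 : ℝ) < |γ p0.1.1 - γ p0.1.2| :=
          abs_pos.mpr (sub_ne_zero.mpr fun h => p0.2 (hγ h))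
        have hge : |γ p0.1.1 - γ p0.1.2| ≤ g := by
          rw [hg, gammaGap]
          exact le_ciInf fun p => hp0 p
        linarith
      have hoff : ∀ i, g * frob (offBdiag (B i)) ≤ frob (Rt i) := by
        intro i
        have hsq : (g * frob (offBdiag (B i))) ^ 2 ≤ frob (Rt i) ^ 2 := by
          rw [mul_pow, frob_sq', frob_sq', Finset.mul_sum]
          refine Finset.sum_le_sum fun p _ => ?_
          rw [Finset.mul_sum]
          refine Finset.sum_le_sum fun q _ => ?_
          rcases eq_or_ne p.1 q.1 with h | h
          · have : offBdiag (B i) p q = 0 := by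
              simp [offBdiag, bdiag, h, Matrix.sub_apply]
            rw [this]
            simpa using sq_nonneg (Rt i p q)
          · have he : offBdiag (B i) p q = B i p q := by
              simp [offBdiag, bdiag, h, Matrix.sub_apply]
            have hRe : Rt i p q = B i p q * (γ q.1 - γ p.1) := by
              rw [hRt i]
              simp only [Matrix.sub_apply, gmat, Matrix.mul_diagonal, Matrix.diagonal_mul, hB]
              ring
            rw [he, hRe]
            have h1 : |g * B i p q| ≤ |B i p q * (γ q.1 - γ p.1)| := by
              rw [abs_mul, abs_mul, mul_comm |g|]
              refine mul_le_mul_of_nonneg_left ?_ (abs_nonneg _)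
              rw [abs_of_pos hgpos] at *
              rw [abs_sub_comm]
              exact hgle p.1 q.1 h
            calc g ^ 2 * B i p q ^ 2 = |g * B i p q| ^ 2 := by rw [sq_abs]; ring
              _ ≤ |B i p q * (γ q.1 - γ p.1)| ^ 2 := pow_le_pow_left₀ (abs_nonneg _) h1 2
              _ = (B i p q * (γ q.1 - γ p.1)) ^ 2 := sq_abs _
        have := Real.sqrt_le_sqrt hsq
        rwa [Real.sqrt_sq (mul_nonneg hgpos.le (frob_nonneg' _)),
          Real.sqrt_sq (frob_nonneg' _)] at this
      set c : ℝ := spec Wt⁻¹ ^ 2 / g with hc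
      have hc0 : 0 ≤ c := div_nonneg (pow_nonneg (spec_nonneg' _) 2) hgpos.le
      have hEi : ∀ i, frob (-((Wt⁻¹)ᵀ * offBdiag (B i) * Wt⁻¹)) ≤ c * frob (Rt i) := by
        intro i
        rw [frob_neg']
        have s1 : frob ((Wt⁻¹)ᵀ * offBdiag (B i) * Wt⁻¹)
            ≤ frob ((Wt⁻¹)ᵀ * offBdiag (B i)) * spec Wt⁻¹ := mul_frob_le' _ _
        have s2 : frob ((Wt⁻¹)ᵀ * offBdiag (B i)) ≤ spec Wt⁻¹ * frob (offBdiag (B i)) := by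
          have := frob_mul_le' (Wt⁻¹)ᵀ (offBdiag (B i))
          rwa [spec_transpose'] at this
        have s3 : frob (offBdiag (B i)) ≤ frob (Rt i) / g := by
          rw [le_div_iff₀ hgpos, mul_comm]
          exact hoff i
        calc frob ((Wt⁻¹)ᵀ * offBdiag (B i) * Wt⁻¹)
            ≤ frob ((Wt⁻¹)ᵀ * offBdiag (B i)) * spec Wt⁻¹ := s1
          _ ≤ (spec Wt⁻¹ * frob (offBdiag (B i))) * spec Wt⁻¹ :=
              mul_le_mul_of_nonneg_right s2 (spec_nonneg' _)
          _ = spec Wt⁻¹ ^ 2 * frob (offBdiag (B i)) := by ring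
          _ ≤ spec Wt⁻¹ ^ 2 * (frob (Rt i) / g) :=
              mul_le_mul_of_nonneg_left s3 (pow_nonneg (spec_nonneg' _) 2)
          _ = c * frob (Rt i) := by rw [hc]; ring
      have hsum : ∑ i, frob (-((Wt⁻¹)ᵀ * offBdiag (B i) * Wt⁻¹)) ^ 2
          ≤ c ^ 2 * ∑ i, frob (Rt i) ^ 2 := by
        rw [Finset.mul_sum]
        refine Finset.sum_le_sum fun i _ => ?_
        have := pow_le_pow_left₀ (frob_nonneg' _) (hEi i) 2
        rwa [mul_pow] at this
      calc Real.sqrt (∑ i, frob (-((Wt⁻¹)ᵀ * offBdiag (B i) * Wt⁻¹)) ^ 2)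
          ≤ Real.sqrt (c ^ 2 * ∑ i, frob (Rt i) ^ 2) := Real.sqrt_le_sqrt hsum
        _ = c * Real.sqrt (∑ i, frob (Rt i) ^ 2) := by
            rw [Real.sqrt_mul (sq_nonneg c), Real.sqrt_sq hc0]
        _ = spec Wt⁻¹ ^ 2 * r / g := by rw [hr, hc]; ring
    · have hall : ∀ p q : BlkIdx n, p.1 = q.1 := by
        intro p q
        by_contra h
        exact hne ⟨⟨(p.1, q.1), h⟩⟩
      have hoff0 : ∀ i, offBdiag (B i) = 0 := by
        intro i
        ext p q
        simp [offBdiag, bdiag, hall p q, Matrix.sub_apply]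
      have hg0 : g = 0 := by
        haveI : IsEmpty {p : Fin t × Fin t // p.1 ≠ p.2} := not_nonempty_iff.mp hne
        rw [hg, gammaGap]
        exact Real.iInf_of_isEmpty _
      have hE0 : ∀ i, frob (-((Wt⁻¹)ᵀ * offBdiag (B i) * Wt⁻¹)) = 0 := by
        intro i
        rw [hoff0 i, Matrix.mul_zero, Matrix.zero_mul, neg_zero]
        simp [frob]
      rw [hg0, div_zero]
      simp [hE0]

end JBD
end

section
/- For every W ∈ 𝕎_{τ_n}, where τ_n has cardinality t, the spectral norm satisfies 1 ≤ ‖W‖₂ ≤ √t. -/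
open Matrix BigOperators Kronecker
open scoped ENNReal

namespace JBD

variable {t : ℕ} {n : Fin t → ℕ}

private lemma key {t : ℕ} {n : Fin t → ℕ} (W : Matrix (BlkIdx n) (BlkIdx n) ℝ)
    (hW : bdiag (Wᵀ * W) = 1) (j : Fin t) (w : BlkIdx n → ℝ)
    (hsupp : ∀ p : BlkIdx n, p.1 ≠ j → w p = 0) :
    ∑ p, ((W *ᵥ w) p) ^ 2 = ∑ p, (w p) ^ 2 := by
  calc ∑ p, ((W *ᵥ w) p) ^ 2
      = (W *ᵥ w) ⬝ᵥ (W *ᵥ w) := by simp [dotProduct, sq]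
    _ = w ⬝ᵥ ((Wᵀ * W) *ᵥ w) := by
        conv_rhs => rw [← Matrix.mulVec_mulVec, Matrix.dotProduct_mulVec,
          Matrix.vecMul_transpose]
    _ = w ⬝ᵥ ((bdiag (Wᵀ * W)) *ᵥ w) := by
        simp only [dotProduct, Matrix.mulVec, dotProduct, Finset.mul_sum]
        refine Finset.sum_congr rfl fun p _ => Finset.sum_congr rfl fun q _ => ?_
        by_cases h : p.1 = q.1
        · simp [bdiag, h]
        · rcases eq_or_ne p.1 j with hp | hp
          · have : q.1 ≠ j := fun hq => h (hp.trans hq.symm)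
            simp [hsupp q this]
          · simp [hsupp p hp]
    _ = w ⬝ᵥ w := by rw [hW, Matrix.one_mulVec]
    _ = ∑ p, (w p) ^ 2 := by simp [dotProduct, sq]

/-- for `W ∈ 𝕎_{τ_n}`, `1 ≤ ‖W‖₂ ≤ √t`. -/
theorem spec_norm_bounds_of_memW {t : ℕ} {n : Fin t → ℕ} (ht : 0 < t) (hn : ∀ j, 0 < n j)
    (W : Matrix (BlkIdx n) (BlkIdx n) ℝ) (hW : MemW W) :
    1 ≤ spec W ∧ spec W ≤ Real.sqrt (t : ℝ) := by
  obtain ⟨hWu, hWb⟩ := hW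
  set T := Matrix.toEuclideanCLM (𝕜 := ℝ) W with hT
  set L := (WithLp.linearEquiv 2 ℝ ((BlkIdx n) → ℝ)).symm with hL
  have hTL : ∀ w : BlkIdx n → ℝ, T (L w) = L (W *ᵥ w) := fun w =>
    Matrix.toEuclideanCLM_toLp W w
  have hnorm : ∀ u : BlkIdx n → ℝ, ‖L u‖ = Real.sqrt (∑ p, (u p) ^ 2) := by
    intro u
    rw [EuclideanSpace.norm_eq]
    congr 1
    refine Finset.sum_congr rfl fun p _ => ?_
    simp [hL, Real.norm_eq_abs, sq_abs, WithLp.linearEquiv, sq]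
  have hblock : ∀ (j : Fin t) (w : BlkIdx n → ℝ), (∀ p : BlkIdx n, p.1 ≠ j → w p = 0) →
      ‖T (L w)‖ = Real.sqrt (∑ p, (w p) ^ 2) := by
    intro j w hsupp
    rw [hTL, hnorm, key W hWb j w hsupp]
  have hspec : spec W = ‖T‖ := rfl
  constructor
  · -- lower bound
    have j0 : Fin t := ⟨0, ht⟩
    set p0 : BlkIdx n := ⟨⟨0, ht⟩, ⟨0, hn ⟨0, ht⟩⟩⟩ with hp0
    set w0 : BlkIdx n → ℝ := Pi.single p0 1 with hw0
    have hsupp0 : ∀ p : BlkIdx n, p.1 ≠ p0.1 → w0 p = 0 := fun p hp =>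
      Pi.single_eq_of_ne (fun h => hp (by rw [h])) 1
    have hs1 : ∑ p, (w0 p) ^ 2 = 1 := by simp [hw0, Pi.single_apply]
    have h1 : ‖T (L w0)‖ = 1 := by
      rw [hblock p0.1 w0 hsupp0, hs1, Real.sqrt_one]
    have h2 : ‖L w0‖ = 1 := by rw [hnorm, hs1, Real.sqrt_one]
    have := T.le_opNorm (L w0)
    rw [h1, h2, mul_one] at this
    rwa [hspec]
  · -- upper bound
    rw [hspec]
    refine ContinuousLinearMap.opNorm_le_bound T (Real.sqrt_nonneg _) fun x => ?_
    set v : BlkIdx n → ℝ := L.symm x with hv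
    set xb : Fin t → (BlkIdx n → ℝ) := fun j p => if p.1 = j then v p else 0 with hxb
    have hsum : v = ∑ j, xb j := by
      funext p
      simp [hxb, Finset.sum_apply, Finset.sum_ite_eq]
    have hxsum : x = ∑ j, L (xb j) := by
      rw [← map_sum, ← hsum, hv, LinearEquiv.apply_symm_apply]
    have hxbsupp : ∀ (j : Fin t) (p : BlkIdx n), p.1 ≠ j → xb j p = 0 := by
      intro j p hp; simp [hxb, hp]
    set a : Fin t → ℝ := fun j => Real.sqrt (∑ p, (xb j p) ^ 2) with ha
    have ha0 : ∀ j, 0 ≤ a j := fun j => Real.sqrt_nonneg _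
    have hasq : ∑ j, (a j) ^ 2 = ∑ p, (v p) ^ 2 := by
      have h1 : ∀ j, (a j) ^ 2 = ∑ p, (xb j p) ^ 2 := fun j =>
        Real.sq_sqrt (Finset.sum_nonneg fun p _ => sq_nonneg _)
      simp only [h1]
      rw [Finset.sum_comm]
      refine Finset.sum_congr rfl fun p _ => ?_
      simp [hxb, apply_ite (· ^ 2), Finset.sum_ite_eq]
    have hxnorm : ‖x‖ = Real.sqrt (∑ p, (v p) ^ 2) := by
      rw [← hnorm v, hv, LinearEquiv.apply_symm_apply]
    have step1 : ‖T x‖ ≤ ∑ j, a j := by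
      calc ‖T x‖ = ‖∑ j, T (L (xb j))‖ := by rw [hxsum, map_sum]
        _ ≤ ∑ j, ‖T (L (xb j))‖ := norm_sum_le _ _
        _ = ∑ j, a j := Finset.sum_congr rfl fun j _ => hblock j (xb j) (hxbsupp j)
    have step2 : ∑ j, a j ≤ Real.sqrt (t : ℝ) * ‖x‖ := by
      have hcs : (∑ j, a j) ^ 2 ≤ (t : ℝ) * ∑ j, (a j) ^ 2 := by
        have := sq_sum_le_card_mul_sum_sq (s := Finset.univ) (f := a)
        simpa using this
      have hnn : 0 ≤ ∑ j, a j := Finset.sum_nonneg fun j _ => ha0 j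
      calc ∑ j, a j = Real.sqrt ((∑ j, a j) ^ 2) := (Real.sqrt_sq hnn).symm
        _ ≤ Real.sqrt ((t : ℝ) * ∑ j, (a j) ^ 2) := Real.sqrt_le_sqrt hcs
        _ = Real.sqrt (t : ℝ) * Real.sqrt (∑ j, (a j) ^ 2) := Real.sqrt_mul (by positivity) _
        _ = Real.sqrt (t : ℝ) * ‖x‖ := by rw [hasq, hxnorm]
    exact step1.trans step2


end JBD
end

section
/- Let W, W̃ ∈ 𝕎_{τ_n}, D ∈ 𝔻_{τ_n} and Π ∈ ℙ_{τ_n}. If W̃ = W D Π, then D is orthogonal, and consequently ‖W̃‖₂ = ‖W‖₂. -/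
open Matrix BigOperators Kronecker
open scoped ENNReal

namespace JBD

variable {t : ℕ} {n : Fin t → ℕ}

lemma perm_conj_apply {I : Type*} [DecidableEq I] [Fintype I] (σ : Equiv.Perm I)
    (M : Matrix I I ℝ) :
    (σ.permMatrix ℝ)ᵀ * M * σ.permMatrix ℝ = M.submatrix σ.symm σ.symm := by
  show (σ.toPEquiv.toMatrix : Matrix I I ℝ)ᵀ * M * σ.toPEquiv.toMatrix = _
  have h1 : (σ.toPEquiv.toMatrix : Matrix I I ℝ)ᵀ = σ.symm.toPEquiv.toMatrix := by
    rw [Equiv.toPEquiv_symm, PEquiv.toMatrix_symm]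
  rw [h1, Matrix.mul_assoc, PEquiv.mul_toMatrix_toPEquiv, PEquiv.toMatrix_toPEquiv_mul,
    Matrix.submatrix_submatrix]
  rfl

lemma bdiag_conj {t : ℕ} {n : Fin t → ℕ} (D : Matrix (BlkIdx n) (BlkIdx n) ℝ)
    (hD : IsBlockDiag D) (M : Matrix (BlkIdx n) (BlkIdx n) ℝ) :
    bdiag (Dᵀ * M * D) = Dᵀ * bdiag M * D := by
  ext p q
  by_cases hpq : p.1 = q.1
  · have h1 : bdiag (Dᵀ * M * D) p q = (Dᵀ * M * D) p q := if_pos hpq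
    rw [h1]
    simp only [Matrix.mul_apply, Matrix.transpose_apply]
    refine Finset.sum_congr rfl fun s _ => ?_
    by_cases hsq : s.1 = q.1
    · refine congrArg (· * D s q) ?_
      refine Finset.sum_congr rfl fun r _ => ?_
      by_cases hrp : r.1 = p.1
      · have hb : bdiag M r s = M r s := if_pos (by rw [hrp, hsq, hpq])
        rw [hb]
      · rw [hD r p hrp, zero_mul, zero_mul]
    · rw [hD s q hsq, mul_zero, mul_zero]
  · have h1 : bdiag (Dᵀ * M * D) p q = 0 := if_neg hpq
    rw [h1]
    simp only [Matrix.mul_apply, Matrix.transpose_apply]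
    symm
    refine Finset.sum_eq_zero fun s _ => ?_
    by_cases hsq : s.1 = q.1
    · rw [Finset.sum_eq_zero, zero_mul]
      intro r _
      by_cases hrp : r.1 = p.1
      · have hb : bdiag M r s = 0 := if_neg (by rw [hrp, hsq]; exact hpq)
        rw [hb, mul_zero]
      · rw [hD r p hrp, zero_mul]
    · rw [hD s q hsq, mul_zero]

/-- Lemma 3.4: if `W, W̃ ∈ 𝕎_{τ_n}` and `W̃ = W D Π` with `D ∈ 𝔻_{τ_n}`,
`Π ∈ ℙ_{τ_n}`, then `D` is orthogonal and `‖W̃‖₂ = ‖W‖₂`. -/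
theorem blockDiag_factor_orthogonal {t : ℕ} {n : Fin t → ℕ} (hn : ∀ j, 0 < n j)
    (W Wt D P : Matrix (BlkIdx n) (BlkIdx n) ℝ)
    (hW : MemW W) (hWt : MemW Wt) (hD : IsBlockDiag D) (hP : IsBDPerm P)
    (heq : Wt = W * D * P) :
    Dᵀ * D = 1 ∧ spec Wt = spec W := by
  obtain ⟨⟨σ, hPσ⟩, hPpres⟩ := hP
  have hconj : ∀ M : Matrix (BlkIdx n) (BlkIdx n) ℝ,
      Pᵀ * M * P = M.submatrix σ.symm σ.symm := by
    intro M; rw [hPσ]; exact perm_conj_apply σ M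
  -- σ preserves blocks
  have hblk : ∀ a b : BlkIdx n, a.1 = b.1 → (σ a).1 = (σ b).1 := by
    intro a b hab
    by_contra hne
    set E : Matrix (BlkIdx n) (BlkIdx n) ℝ :=
      fun p q => if p = a ∧ q = b then 1 else 0 with hEdef
    have hE : IsBlockDiag E := by
      intro p q hpq
      simp only [hEdef]
      rw [if_neg]
      rintro ⟨rfl, rfl⟩; exact hpq hab
    have h0 := hPpres E hE (σ a) (σ b) hne
    rw [hconj] at h0
    rw [Matrix.submatrix_apply] at h0
    simp [hEdef, Matrix.submatrix_apply] at h0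
  -- Pᵀ * P = 1
  have hPP : Pᵀ * P = 1 := by
    have := hconj 1
    rwa [Matrix.mul_one, Matrix.submatrix_one_equiv] at this
  have hDD : Dᵀ * D = bdiag (Dᵀ * (Wᵀ * W) * D) := by
    rw [bdiag_conj D hD, hW.2, Matrix.mul_one]
  have hWtWt : Wtᵀ * Wt = Pᵀ * (Dᵀ * (Wᵀ * W) * D) * P := by
    rw [heq]
    simp only [Matrix.transpose_mul]
    noncomm_ring
  have hWt2 := hWt.2
  rw [hWtWt, hconj] at hWt2
  -- D orthogonal
  have hOrth : Dᵀ * D = 1 := by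
    rw [hDD]
    ext a b
    by_cases hab : a.1 = b.1
    · have h1 : ((Dᵀ * (Wᵀ * W) * D).submatrix σ.symm σ.symm) (σ a) (σ b)
          = (Dᵀ * (Wᵀ * W) * D) a b := by
        simp [Matrix.submatrix_apply]
      have h2 : bdiag ((Dᵀ * (Wᵀ * W) * D).submatrix σ.symm σ.symm) (σ a) (σ b)
          = (1 : Matrix (BlkIdx n) (BlkIdx n) ℝ) (σ a) (σ b) := by rw [hWt2]
      have h3 : bdiag ((Dᵀ * (Wᵀ * W) * D).submatrix σ.symm σ.symm) (σ a) (σ b)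
          = ((Dᵀ * (Wᵀ * W) * D).submatrix σ.symm σ.symm) (σ a) (σ b) :=
        if_pos (hblk a b hab)
      have h4 : bdiag (Dᵀ * (Wᵀ * W) * D) a b = (Dᵀ * (Wᵀ * W) * D) a b := if_pos hab
      rw [h4, ← h1, ← h3, h2]
      by_cases h : a = b
      · subst h; simp [Matrix.one_apply]
      · rw [Matrix.one_apply_ne (fun hc => h (σ.injective hc)), Matrix.one_apply_ne h]
    · have h : a ≠ b := fun hc => hab (by rw [hc])
      have h4 : bdiag (Dᵀ * (Wᵀ * W) * D) a b = 0 := if_neg hab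
      rw [h4, Matrix.one_apply_ne h]
  refine ⟨hOrth, ?_⟩
  set U := D * P with hU
  have hstarU : star U = Uᵀ := by
    ext p q
    simp [Matrix.star_apply]
  have hUtU : Uᵀ * U = 1 := by
    have h5 : Uᵀ * U = Pᵀ * (Dᵀ * D) * P := by
      rw [hU, Matrix.transpose_mul]; noncomm_ring
    rw [h5, hOrth, Matrix.mul_one, hPP]
  have hUunitary : U ∈ unitary (Matrix (BlkIdx n) (BlkIdx n) ℝ) := by
    rw [Unitary.mem_iff, hstarU]
    exact ⟨hUtU, mul_eq_one_comm.mp hUtU⟩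
  have hWtU : Wt = W * U := by rw [heq, hU, Matrix.mul_assoc]
  rw [spec, spec, hWtU, _root_.map_mul]
  exact CStarRing.norm_mul_mem_unitary _
    (Unitary.map_mem (f := Matrix.toEuclideanCLM (𝕜 := ℝ)) hUunitary)

end JBD
end

section
/- Let A_i = diag(A_i^{(11)},…,A_i^{(tt)}) with A_i^{(jj)} ∈ ℝ^{n_j×n_j} for 1 ≤ i ≤ m, let 𝒜_j = {A_i^{(jj)}}_{i=1}^m, and suppose dim 𝒩(𝒜_ℓ) = 1 for all 1 ≤ ℓ ≤ t, so that the modulus of non-divisibility ω_rob is well-defined. Let Z ∈ ℝ^{n×n} with blocks Z_{jk} ∈ ℝ^{n_j×n_k}, set R_i = A_i Z − Zᵀ A_i, and let μ_{j1},…,μ_{j n_j} be the eigenvalues of Z_{jj} (roots in ℂ of its characteristic polynomial, with multiplicity). Then for each j there exists a real number μ̂_j such that Σ_{k=1}^{n_j} |μ_{jk} − μ̂_j|² ≤ (Σ_{i=1}^m ‖Bdiag_{τ_n}(R_i)‖_F²)/ω_rob². -/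
open Matrix BigOperators Kronecker
open scoped ENNReal

namespace JBD

variable {t : ℕ} {n : Fin t → ℕ}

section SchurIneq
open Polynomial

private lemma sum_sq_abs_eq_trace {I : Type*} [Fintype I] (A : Matrix I I ℂ) :
    ∑ i, ∑ j, ‖A i j‖ ^ 2 = (Matrix.trace (Aᴴ * A)).re := by
  have h : ∀ j, (Aᴴ * A) j j = ((∑ i, ‖A i j‖ ^ 2 : ℝ) : ℂ) := by
    intro j
    simp only [Matrix.mul_apply, Matrix.conjTranspose_apply, Complex.sq_norm]
    push_cast
    refine Finset.sum_congr rfl fun i _ => ?_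
    rw [Complex.normSq_eq_conj_mul_self]
    rfl
  have : Matrix.trace (Aᴴ * A) = ∑ j, ((∑ i, ‖A i j‖ ^ 2 : ℝ) : ℂ) := by
    unfold Matrix.trace
    exact Finset.sum_congr rfl fun j _ => h j
  rw [this, Finset.sum_comm]
  rw [Complex.re_sum]
  simp [← Complex.ofReal_pow]

private lemma unitary_conj_sum_sq_abs {I : Type*} [Fintype I] [DecidableEq I]
    {U : Matrix I I ℂ} (hU : star U * U = 1) (W : Matrix I I ℂ) :
    ∑ i, ∑ j, ‖(star U * W * U) i j‖ ^ 2 = ∑ i, ∑ j, ‖W i j‖ ^ 2 := by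
  have hU' : U * star U = 1 := mul_eq_one_comm.mp hU
  rw [sum_sq_abs_eq_trace, sum_sq_abs_eq_trace]
  congr 1
  have h1 : (star U * W * U)ᴴ * (star U * W * U) = Uᴴ * (Wᴴ * W) * U := by
    have h2 : (star U * W * U)ᴴ = Uᴴ * Wᴴ * U := by
      show (Uᴴ * W * U)ᴴ = _
      simp [Matrix.conjTranspose_mul, Matrix.mul_assoc]
    rw [h2]
    calc Uᴴ * Wᴴ * U * (star U * W * U) = Uᴴ * Wᴴ * (U * star U) * W * U := by
          simp only [Matrix.mul_assoc]
      _ = Uᴴ * (Wᴴ * W) * U := by rw [hU']; simp only [Matrix.mul_one, Matrix.mul_assoc]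
  rw [h1, Matrix.trace_mul_comm, ← Matrix.mul_assoc]
  rw [show U * Uᴴ = 1 from hU', Matrix.one_mul]

/-- Conjugation invariance of the characteristic polynomial. -/
private lemma charpoly_conj {I : Type*} [Fintype I] [DecidableEq I]
    {U : Matrix I I ℂ} (hU : star U * U = 1) (W : Matrix I I ℂ) :
    (star U * W * U).charpoly = W.charpoly := by
  have hU' : U * star U = 1 := mul_eq_one_comm.mp hU
  have hmap : charmatrix (star U * W * U) =
      (star U).map C * charmatrix W * U.map C := by
    unfold charmatrix
    rw [Matrix.mul_sub, Matrix.sub_mul]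
    congr 1
    · rw [← (Matrix.scalar_commute (X : ℂ[X]) (fun r => Commute.all _ r) ((star U).map C)).eq,
        Matrix.mul_assoc, ← Matrix.map_mul, hU, Matrix.map_one C (map_zero C) (map_one C),
        Matrix.mul_one]
    · rw [RingHom.mapMatrix_apply, RingHom.mapMatrix_apply, ← Matrix.map_mul, ← Matrix.map_mul]
  unfold Matrix.charpoly
  rw [hmap, Matrix.det_mul, Matrix.det_mul, mul_comm, ← mul_assoc, ← Matrix.det_mul,
    ← Matrix.map_mul, hU', Matrix.map_one C (map_zero C) (map_one C), Matrix.det_one, one_mul]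


private lemma charmatrix_submatrix {k l : ℕ} (M : Matrix (Fin l) (Fin l) ℂ)
    (f : Fin k → Fin l) (hf : Function.Injective f) :
    (charmatrix M).submatrix f f = charmatrix (M.submatrix f f) := by
  ext i j
  by_cases h : i = j
  · subst h
    rw [Matrix.submatrix_apply, charmatrix_apply_eq, charmatrix_apply_eq, Matrix.submatrix_apply]
  · rw [Matrix.submatrix_apply, charmatrix_apply_ne _ _ _ (fun hc => h (hf hc)),
      charmatrix_apply_ne _ _ _ h, Matrix.submatrix_apply]

/-- Schur's inequality: the sum of squared moduli of the eigenvalues is bounded by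
the squared Frobenius norm. -/
private lemma schur_ineq : ∀ s : ℕ, ∀ W : Matrix (Fin s) (Fin s) ℂ,
    ((W.charpoly.roots).map fun μ => ‖μ‖ ^ 2).sum
      ≤ ∑ i, ∑ j, ‖W i j‖ ^ 2 := by
  intro s
  induction s with
  | zero =>
    intro W
    have h1 : W.charpoly = 1 := by
      unfold Matrix.charpoly
      exact Matrix.det_isEmpty
    rw [h1, Polynomial.roots_one]
    simp
  | succ s IH =>
    intro W
    -- find an eigenvalue
    have hdeg : W.charpoly.degree ≠ 0 := by
      have h1 := Matrix.charpoly_natDegree_eq_dim W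
      have h2 : W.charpoly.degree = ((s+1 : ℕ) : WithBot ℕ) := by
        rw [Polynomial.degree_eq_natDegree (Matrix.charpoly_monic W).ne_zero, h1]
        simp
      rw [h2]
      exact_mod_cast Nat.succ_ne_zero s
    obtain ⟨μ, hμ⟩ := IsAlgClosed.exists_root W.charpoly hdeg
    -- find an eigenvector
    have hdet : (μ • (1 : Matrix (Fin (s+1)) (Fin (s+1)) ℂ) - W).det = 0 := by
      have h2 : (charmatrix W).map (Polynomial.evalRingHom μ) =
          μ • (1 : Matrix (Fin (s+1)) (Fin (s+1)) ℂ) - W := by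
        ext i j
        by_cases h : i = j
        · subst h
          simp [charmatrix_apply_eq, Matrix.one_apply]
        · simp [charmatrix_apply_ne _ _ _ h, Matrix.one_apply_ne h]
      have h3 := (Polynomial.evalRingHom μ).map_det (charmatrix W)
      rw [show (Polynomial.evalRingHom μ).mapMatrix (charmatrix W)
          = (charmatrix W).map (Polynomial.evalRingHom μ) from rfl, h2] at h3
      have h4 : (Polynomial.evalRingHom μ) W.charpoly = 0 := hμ
      rw [Matrix.charpoly] at h4
      rw [← h3, h4]
    obtain ⟨v, hv0, hv⟩ := Matrix.exists_mulVec_eq_zero_iff.mpr hdet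
    have heig : W *ᵥ v = μ • v := by
      have := hv
      rw [Matrix.sub_mulVec, Matrix.smul_mulVec, Matrix.one_mulVec, sub_eq_zero] at this
      exact this.symm
    -- normalize and extend to an orthonormal basis
    set vE : EuclideanSpace ℂ (Fin (s+1)) := (WithLp.equiv 2 _).symm v with hvE
    have hvE0 : vE ≠ 0 := by
      simpa [hvE] using hv0
    set u : EuclideanSpace ℂ (Fin (s+1)) := ((‖vE‖ : ℂ))⁻¹ • vE with hu
    have hnvE : (‖vE‖ : ℂ) ≠ 0 := by
      simpa using norm_ne_zero_iff.mpr hvE0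
    have hu1 : ‖u‖ = 1 := by
      rw [hu, norm_smul, norm_inv, Complex.norm_real, norm_norm,
        inv_mul_cancel₀ (norm_ne_zero_iff.mpr hvE0)]
    have horth : Orthonormal ℂ (({0} : Set (Fin (s+1))).restrict (fun _ => u)) := by
      constructor
      · intro i
        exact hu1
      · intro i j hij
        exact absurd (Subsingleton.elim i j) hij
    obtain ⟨b, hb⟩ := horth.exists_orthonormalBasis_extension_of_card_eq
      (by simp [finrank_euclideanSpace])
    have hb0 : b 0 = u := hb 0 rfl
    -- the unitary matrix of basis vectors as columns
    set U : Matrix (Fin (s+1)) (Fin (s+1)) ℂ := (fun i j => b j i) with hUdef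
    have hUU : star U * U = 1 := by
      ext j k
      have h := orthonormal_iff_ite.mp b.orthonormal j k
      rw [PiLp.inner_apply] at h
      simp only [RCLike.inner_apply, starRingEnd_apply] at h
      rw [Matrix.mul_apply, Matrix.one_apply, ← h]
      refine Finset.sum_congr rfl fun i _ => ?_
      rw [Matrix.star_apply]
      exact mul_comm _ _
    -- the triangularized matrix
    set W' : Matrix (Fin (s+1)) (Fin (s+1)) ℂ := star U * W * U with hW'
    have hw0 : W *ᵥ (fun k => b 0 k) = μ • (fun k => b 0 k) := by
      have hfun : (fun k => b 0 k) = ((‖vE‖ : ℂ))⁻¹ • v := by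
        funext k
        rw [hb0]
        rfl
      rw [hfun, Matrix.mulVec_smul, heig, smul_comm]
    have hcol : ∀ i, W' i 0 = if i = 0 then μ else 0 := by
      intro i
      have h1 : ∀ jj, (W * U) jj 0 = μ * b 0 jj := by
        intro jj
        have h2 : (W * U) jj 0 = (W *ᵥ (fun k => b 0 k)) jj := by
          rw [Matrix.mul_apply, Matrix.mulVec, dotProduct]
        rw [h2, hw0]
        rfl
      have h3 := orthonormal_iff_ite.mp b.orthonormal i 0
      rw [PiLp.inner_apply] at h3
      simp only [RCLike.inner_apply, starRingEnd_apply] at h3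
      have h4 : W' i 0 = ∑ j, (star U) i j * (W * U) j 0 := by
        rw [hW', Matrix.mul_assoc, Matrix.mul_apply]
      rw [h4]
      calc ∑ j, (star U) i j * (W * U) j 0 = ∑ j, μ * (star (b i j) * b 0 j) := by
            refine Finset.sum_congr rfl fun j _ => ?_
            rw [Matrix.star_apply, h1 j]
            show star (b i j) * (μ * b 0 j) = μ * (star (b i j) * b 0 j)
            ring
        _ = μ * ∑ j, star (b i j) * b 0 j := by rw [← Finset.mul_sum]
        _ = μ * (if i = 0 then 1 else 0) := by
            rw [← h3]; congr 1; exact Finset.sum_congr rfl fun j _ => mul_comm _ _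
        _ = if i = 0 then μ else 0 := by split <;> ring
    -- factor the characteristic polynomial
    have hfact : W'.charpoly
        = (X - C μ) * (W'.submatrix Fin.succ Fin.succ).charpoly := by
      unfold Matrix.charpoly
      rw [Matrix.det_succ_column_zero, Finset.sum_eq_single 0]
      · rw [charmatrix_apply_eq, hcol 0, if_pos rfl,
          show ((0 : Fin (s+1)).succAbove) = Fin.succ from Fin.succAbove_zero,
          charmatrix_submatrix W' Fin.succ (Fin.succ_injective s)]
        simp
      · intro i _ hi
        rw [charmatrix_apply_ne _ _ _ hi, hcol i, if_neg hi]
        simp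
      · intro h
        exact absurd (Finset.mem_univ 0) h
    have hch : W.charpoly = (X - C μ) * (W'.submatrix Fin.succ Fin.succ).charpoly := by
      rw [← charpoly_conj hUU W]
      exact hfact
    have hroots : W.charpoly.roots
        = μ ::ₘ (W'.submatrix Fin.succ Fin.succ).charpoly.roots := by
      rw [hch, Polynomial.roots_mul
        (mul_ne_zero (Polynomial.X_sub_C_ne_zero μ) (Matrix.charpoly_monic _).ne_zero),
        Polynomial.roots_X_sub_C]
      rw [Multiset.singleton_add]
    rw [hroots, Multiset.map_cons, Multiset.sum_cons, ← unitary_conj_sum_sq_abs hUU W]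
    have hIH := IH (W'.submatrix Fin.succ Fin.succ)
    have hW00 : W' 0 0 = μ := by rw [hcol 0, if_pos rfl]
    have step1 : ‖μ‖ ^ 2
        + ((((W'.submatrix Fin.succ Fin.succ).charpoly.roots).map
            fun ν => ‖ν‖ ^ 2)).sum
        ≤ ‖μ‖ ^ 2
          + ∑ i : Fin s, ∑ j : Fin s, ‖W' i.succ j.succ‖ ^ 2 := by
      refine add_le_add (le_refl _) ?_
      simpa [Matrix.submatrix_apply] using hIH
    refine le_trans step1 ?_
    have houter : ∑ i, ∑ j, ‖W' i j‖ ^ 2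
        = (∑ j, ‖W' 0 j‖ ^ 2)
          + ∑ i : Fin s, ∑ j, ‖W' i.succ j‖ ^ 2 :=
      Fin.sum_univ_succ _
    rw [show star U * W * U = W' from rfl, houter]
    refine add_le_add ?_ ?_
    · rw [← hW00]
      exact Finset.single_le_sum (f := fun j => ‖W' 0 j‖ ^ 2)
        (fun j _ => sq_nonneg _) (Finset.mem_univ 0)
    · refine Finset.sum_le_sum fun i _ => ?_
      rw [Fin.sum_univ_succ (f := fun j => ‖W' i.succ j‖ ^ 2)]
      exact le_add_of_nonneg_left (sq_nonneg _)

private lemma roots_charpoly_sub_smul_one {a : ℕ} (W : Matrix (Fin a) (Fin a) ℂ) (c : ℂ) :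
    (W - c • 1).charpoly.roots = W.charpoly.roots.map (fun μ => μ - c) := by
  set φ : ℂ[X] →+* ℂ[X] := eval₂RingHom Polynomial.C (X + Polynomial.C c) with hφ
  have hXC : ∀ μ : ℂ, φ (X - Polynomial.C μ) = X - Polynomial.C (μ - c) := by
    intro μ
    rw [map_sub, hφ, coe_eval₂RingHom, eval₂_X, eval₂_C, map_sub]
    ring
  have h1 : (W - c • 1).charpoly = φ W.charpoly := by
    unfold Matrix.charpoly
    rw [RingHom.map_det]
    congr 1
    ext i j
    by_cases h : i = j
    · subst h
      rw [RingHom.mapMatrix_apply, Matrix.map_apply, charmatrix_apply_eq, charmatrix_apply_eq,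
        map_sub, hφ, coe_eval₂RingHom, eval₂_X, eval₂_C]
      simp [Matrix.sub_apply, Matrix.smul_apply, Matrix.one_apply]
      ring
    · rw [RingHom.mapMatrix_apply, Matrix.map_apply, charmatrix_apply_ne _ _ _ h,
        charmatrix_apply_ne _ _ _ h, map_neg, hφ, coe_eval₂RingHom, eval₂_C]
      simp [Matrix.sub_apply, Matrix.smul_apply, Matrix.one_apply_ne h]
  have h2 : W.charpoly = (W.charpoly.roots.map fun μ => X - Polynomial.C μ).prod :=
    (IsAlgClosed.splits _).eq_prod_roots_of_monic (Matrix.charpoly_monic W)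
  rw [h1]
  conv_lhs => rw [h2]
  rw [map_multiset_prod, Multiset.map_map]
  have h3 : W.charpoly.roots.map (φ ∘ fun μ => X - Polynomial.C μ)
      = (W.charpoly.roots.map fun μ => μ - c).map (fun ν => X - Polynomial.C ν) := by
    rw [Multiset.map_map]
    exact Multiset.map_congr rfl fun μ _ => hXC μ
  rw [h3, roots_multiset_prod_X_sub_C]

set_option maxHeartbeats 1000000 in
/-- Schur-type inequality for real matrices, centered at a real number `c`. -/
private lemma schur_real {a : ℕ} (Z E : Matrix (Fin a) (Fin a) ℝ) (c : ℝ)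
    (hE : E = Z - c • 1) :
    (((Z.map Complex.ofReal).charpoly.roots).map
        fun μ => ‖μ - (c : ℂ)‖ ^ 2).sum
      ≤ ∑ i, ∑ j, (E i j) ^ 2 := by
  subst hE
  have hmap : (Z.map Complex.ofReal) - (c : ℂ) • 1 = (Z - c • 1).map Complex.ofReal := by
    ext i j
    by_cases h : i = j
    · subst h
      simp [Matrix.map_apply, Matrix.sub_apply, Matrix.smul_apply, Matrix.one_apply]
    · simp [Matrix.map_apply, Matrix.sub_apply, Matrix.smul_apply, Matrix.one_apply_ne h]
  have h1 := schur_ineq a ((Z - c • 1).map Complex.ofReal)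
  rw [← hmap, roots_charpoly_sub_smul_one] at h1
  rw [hmap] at h1
  rw [Multiset.map_map] at h1
  have h2 : ∀ i j, ‖((Z - c • 1).map Complex.ofReal) i j‖ ^ 2
      = ((Z - c • 1) i j) ^ 2 := by
    intro i j
    rw [Matrix.map_apply, Complex.norm_real, Real.norm_eq_abs, sq_abs]
  have hfuneq : ((fun μ => ‖μ‖ ^ 2) ∘ fun μ : ℂ => μ - (c : ℂ))
      = (fun μ : ℂ => ‖μ - (c : ℂ)‖ ^ 2) := rfl
  rw [hfuneq] at h1
  refine le_trans h1 (le_of_eq ?_)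
  exact Finset.sum_congr rfl fun i _ => Finset.sum_congr rfl fun j _ => h2 i j


end SchurIneq

private lemma dot_self_nonneg {I : Type*} [Fintype I] (v : I → ℝ) : 0 ≤ v ⬝ᵥ v :=
  Finset.sum_nonneg fun _ _ => mul_self_nonneg _

private lemma dot_self_eq_zero {I : Type*} [Fintype I] {v : I → ℝ} (h : v ⬝ᵥ v = 0) : v = 0 := by
  funext i
  have := (Finset.sum_eq_zero_iff_of_nonneg (fun i _ => mul_self_nonneg (v i))).mp h i
    (Finset.mem_univ i)
  exact mul_self_eq_zero.mp this

section spectral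
variable {K J : Type*} [Fintype K] [Fintype J] [DecidableEq J]

private lemma inner_eq_dot (u w : EuclideanSpace ℝ J) :
    (inner ℝ u w : ℝ) = (fun i => u i) ⬝ᵥ (fun i => w i) := by
  simp [PiLp.inner_apply, dotProduct, RCLike.inner_apply, starRingEnd_apply, star_trivial]
  exact Finset.sum_congr rfl fun _ _ => mul_comm _ _

variable (G : Matrix K J ℝ)

private lemma dot_gram (v : J → ℝ) : v ⬝ᵥ ((Gᵀ * G) *ᵥ v) = (G *ᵥ v) ⬝ᵥ (G *ᵥ v) := by
  rw [← Matrix.mulVec_mulVec, Matrix.dotProduct_mulVec, Matrix.vecMul_transpose]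

private noncomputable abbrev gramH := Matrix.isHermitian_conjTranspose_mul_self G

/-- coordinates of `v` in the eigenbasis of `Gᵀ G`. -/
private noncomputable def coord (k : J) (v : J → ℝ) : ℝ :=
  (fun i => (gramH G).eigenvectorBasis k i) ⬝ᵥ v

private lemma bfn_dot_bfn (k l : J) :
    (fun i => (gramH G).eigenvectorBasis k i) ⬝ᵥ (fun i => (gramH G).eigenvectorBasis l i)
      = if k = l then 1 else 0 := by
  rw [← inner_eq_dot]
  exact orthonormal_iff_ite.mp (gramH G).eigenvectorBasis.orthonormal k l

private lemma gram_mulVec_basis (k : J) :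
    (Gᵀ * G) *ᵥ (fun i => (gramH G).eigenvectorBasis k i)
      = (gramH G).eigenvalues k • (fun i => (gramH G).eigenvectorBasis k i) :=
  (gramH G).mulVec_eigenvectorBasis k

private lemma dot_basis_gram (k : J) (v : J → ℝ) :
    (fun i => (gramH G).eigenvectorBasis k i) ⬝ᵥ ((Gᵀ * G) *ᵥ v)
      = (gramH G).eigenvalues k * coord G k v := by
  rw [Matrix.dotProduct_mulVec]
  have h1 : (fun i => (gramH G).eigenvectorBasis k i) ᵥ* (Gᵀ * G)
      = (Gᵀ * G) *ᵥ (fun i => (gramH G).eigenvectorBasis k i) := by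
    have hsym : (Gᵀ * G)ᵀ = Gᵀ * G := (gramH G).eq
    conv_lhs => rw [← hsym]
    rw [Matrix.vecMul_transpose]
  rw [h1, gram_mulVec_basis, smul_dotProduct]
  rfl

private lemma dot_self_expand (v : J → ℝ) : v ⬝ᵥ v = ∑ k, coord G k v ^ 2 := by
  have h := (gramH G).eigenvectorBasis.sum_inner_mul_inner
    ((WithLp.equiv 2 _).symm v) ((WithLp.equiv 2 _).symm v)
  simp only [inner_eq_dot] at h
  have h' : v ⬝ᵥ v = ∑ k, (v ⬝ᵥ (fun i => (gramH G).eigenvectorBasis k i))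
      * ((fun i => (gramH G).eigenvectorBasis k i) ⬝ᵥ v) := h.symm
  rw [h']
  refine Finset.sum_congr rfl fun k _ => ?_
  rw [dotProduct_comm]
  unfold coord
  ring

private lemma gram_quadform_expand (v : J → ℝ) :
    (G *ᵥ v) ⬝ᵥ (G *ᵥ v) = ∑ k, (gramH G).eigenvalues k * coord G k v ^ 2 := by
  rw [← dot_gram]
  have h := (gramH G).eigenvectorBasis.sum_inner_mul_inner
    ((WithLp.equiv 2 _).symm v) ((WithLp.equiv 2 _).symm ((Gᵀ * G) *ᵥ v))
  simp only [inner_eq_dot] at h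
  have h' : v ⬝ᵥ ((Gᵀ * G) *ᵥ v) = ∑ k, (v ⬝ᵥ (fun i => (gramH G).eigenvectorBasis k i))
      * ((fun i => (gramH G).eigenvectorBasis k i) ⬝ᵥ ((Gᵀ * G) *ᵥ v)) := h.symm
  rw [h']
  refine Finset.sum_congr rfl fun k _ => ?_
  rw [dot_basis_gram, dotProduct_comm]
  unfold coord
  ring

private lemma gram_quadform_basis (k : J) :
    ((G *ᵥ fun i => (gramH G).eigenvectorBasis k i)
      ⬝ᵥ (G *ᵥ fun i => (gramH G).eigenvectorBasis k i)) = (gramH G).eigenvalues k := by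
  have h := gram_quadform_expand G (fun i => (gramH G).eigenvectorBasis k i)
  have h2 : ∀ l, coord G l (fun i => (gramH G).eigenvectorBasis k i)
      = if l = k then 1 else 0 := fun l => bfn_dot_bfn G l k
  rw [h, Finset.sum_eq_single k]
  · rw [h2 k, if_pos rfl]; ring
  · intro l _ hl
    rw [h2 l, if_neg hl]; ring
  · intro hk; exact absurd (Finset.mem_univ k) hk

private lemma eigenvalues_nonneg (k : J) : 0 ≤ (gramH G).eigenvalues k := by
  rw [← gram_quadform_basis]
  exact dot_self_nonneg _

private lemma mulVec_basis_eq_zero {k : J} (hk : (gramH G).eigenvalues k = 0) :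
    G *ᵥ (fun i => (gramH G).eigenvectorBasis k i) = 0 := by
  apply dot_self_eq_zero
  rw [gram_quadform_basis, hk]

private lemma minNonzeroSV_nonneg : 0 ≤ minNonzeroSV G := by
  apply Real.sInf_nonneg
  rintro s ⟨⟨k, rfl⟩, -⟩
  exact Real.sqrt_nonneg _

private lemma sv_set_finite : {s | (∃ k, sv G k = s) ∧ s ≠ 0}.Finite :=
  (Set.finite_range (sv G)).subset fun s hs => hs.1

private lemma minNonzeroSV_sq_le {k : J} (hk : (gramH G).eigenvalues k ≠ 0) :
    minNonzeroSV G ^ 2 ≤ (gramH G).eigenvalues k := by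
  have hpos : 0 < (gramH G).eigenvalues k := lt_of_le_of_ne (eigenvalues_nonneg G k) (Ne.symm hk)
  have hmem : sv G k ∈ {s | (∃ l, sv G l = s) ∧ s ≠ 0} :=
    ⟨⟨k, rfl⟩, by unfold sv; positivity⟩
  have hle : minNonzeroSV G ≤ sv G k :=
    csInf_le (sv_set_finite G).bddBelow hmem
  calc minNonzeroSV G ^ 2 ≤ sv G k ^ 2 :=
        pow_le_pow_left₀ (minNonzeroSV_nonneg G) hle 2
    _ = (gramH G).eigenvalues k := Real.sq_sqrt hpos.le

lemma spectral_bound (x : J → ℝ) (hx : ∀ v : J → ℝ, G *ᵥ v = 0 → x ⬝ᵥ v = 0) :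
    minNonzeroSV G ^ 2 * (x ⬝ᵥ x) ≤ (G *ᵥ x) ⬝ᵥ (G *ᵥ x) := by
  rw [dot_self_expand G x, gram_quadform_expand G x, Finset.mul_sum]
  refine Finset.sum_le_sum fun k _ => ?_
  by_cases hk : (gramH G).eigenvalues k = 0
  · have h0 : coord G k x = 0 := by
      have := hx _ (mulVec_basis_eq_zero G hk)
      unfold coord
      rw [dotProduct_comm] at this
      exact this
    rw [h0]; ring_nf; exact le_refl _
  · have := minNonzeroSV_sq_le G hk
    have h2 : (0:ℝ) ≤ coord G k x ^ 2 := sq_nonneg _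
    nlinarith [sq_nonneg (coord G k x)]

lemma minNonzeroSV_eq_zero_imp (h0 : minNonzeroSV G = 0) (v : J → ℝ) : G *ᵥ v = 0 := by
  have hall : ∀ k, (gramH G).eigenvalues k = 0 := by
    intro k
    by_contra hk
    have hpos : 0 < (gramH G).eigenvalues k := lt_of_le_of_ne (eigenvalues_nonneg G k) (Ne.symm hk)
    have hmem : sv G k ∈ {s | (∃ l, sv G l = s) ∧ s ≠ 0} :=
      ⟨⟨k, rfl⟩, by unfold sv; positivity⟩
    have hne : {s | (∃ l, sv G l = s) ∧ s ≠ 0}.Nonempty := ⟨_, hmem⟩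
    have := hne.csInf_mem (sv_set_finite G)
    rw [show sInf {s | (∃ l, sv G l = s) ∧ s ≠ 0} = minNonzeroSV G from rfl, h0] at this
    exact this.2 rfl
  apply dot_self_eq_zero
  rw [gram_quadform_expand G v]
  refine Finset.sum_eq_zero fun k _ => ?_
  rw [hall k]; ring

end spectral

private lemma mul_shuffle {a : ℕ} (B : Matrix (Fin a × Fin a) (Fin a × Fin a) ℝ)
    (p q : Fin a × Fin a) : (B * shuffle a) p q = B p q.swap := by
  rw [Matrix.mul_apply, Finset.sum_eq_single q.swap]
  · unfold shuffle
    rw [if_pos (Prod.swap_swap q).symm, mul_one]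
  · intro s _ hs
    unfold shuffle
    rw [if_neg, mul_zero]
    intro h
    exact hs (by rw [h, Prod.swap_swap])
  · intro h
    exact absurd (Finset.mem_univ _) h

private lemma gjj_apply {m a : ℕ} (Aj : Fin m → Matrix (Fin a) (Fin a) ℝ)
    (i : Fin m) (c r : Fin a) (p : Fin a × Fin a) :
    Gjj Aj (i, (c, r)) p
      = (if c = p.1 then Aj i r p.2 else 0) - (if r = p.1 then Aj i p.2 c else 0) := by
  show ((1 : Matrix (Fin a) (Fin a) ℝ) ⊗ₖ Aj i
      - ((Aj i)ᵀ ⊗ₖ (1 : Matrix (Fin a) (Fin a) ℝ)) * shuffle a) (c, r) p = _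
  rw [Matrix.sub_apply, mul_shuffle]
  congr 1
  · rw [Matrix.kroneckerMap_apply, Matrix.one_apply]
    split <;> simp
  · rw [Matrix.kroneckerMap_apply]
    show (Aj i)ᵀ c p.2 * (1 : Matrix (Fin a) (Fin a) ℝ) r p.1 = _
    rw [Matrix.transpose_apply, Matrix.one_apply]
    split <;> simp [mul_comm]

lemma gjj_mulVec {m a : ℕ} (Aj : Fin m → Matrix (Fin a) (Fin a) ℝ)
    (Z : Matrix (Fin a) (Fin a) ℝ) (i : Fin m) (c r : Fin a) :
    (Gjj Aj *ᵥ vecM Z) (i, (c, r)) = (Aj i * Z - Zᵀ * Aj i) r c := by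
  show ∑ p : Fin a × Fin a, Gjj Aj (i, (c, r)) p * vecM Z p = _
  have h1 : ∀ p : Fin a × Fin a, Gjj Aj (i, (c, r)) p * vecM Z p
      = (if c = p.1 then Aj i r p.2 * Z p.2 p.1 else 0)
        - (if r = p.1 then Aj i p.2 c * Z p.2 p.1 else 0) := by
    intro p
    rw [gjj_apply, sub_mul]
    congr 1 <;> (split <;> simp [vecM])
  rw [Finset.sum_congr rfl fun p _ => h1 p, Finset.sum_sub_distrib]
  congr 1
  · rw [Fintype.sum_prod_type, Matrix.mul_apply]
    rw [Finset.sum_comm]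
    refine Finset.sum_congr rfl fun r' _ => ?_
    rw [Finset.sum_ite_eq (Finset.univ) c (fun c' => Aj i r r' * Z r' c'), if_pos (Finset.mem_univ c)]
  · rw [Fintype.sum_prod_type, Matrix.mul_apply]
    rw [Finset.sum_comm]
    refine Finset.sum_congr rfl fun r' _ => ?_
    rw [Finset.sum_ite_eq (Finset.univ) r (fun c' => Aj i r' c * Z r' c'), if_pos (Finset.mem_univ r)]
    rw [Matrix.transpose_apply]
    ring


-- new helpers
private lemma sigma_sum_ge (h : BlkIdx n → ℝ) (hnn : ∀ p, 0 ≤ h p) (j : Fin t) :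
    ∑ x : Fin (n j), h ⟨j, x⟩ ≤ ∑ p : BlkIdx n, h p := by
  rw [← Finset.univ_sigma_univ, Finset.sum_sigma]
  exact Finset.single_le_sum
    (f := fun j' => ∑ x : Fin (n j'), h ⟨j', x⟩)
    (fun j' _ => Finset.sum_nonneg fun x _ => hnn _) (Finset.mem_univ j)

private lemma dblock_R {m : ℕ} (A : Fin m → Matrix (BlkIdx n) (BlkIdx n) ℝ)
    (hA : ∀ i, IsBlockDiag (A i))
    (Ab : ∀ j : Fin t, Fin m → Matrix (Fin (n j)) (Fin (n j)) ℝ)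
    (hAb : ∀ j i, Ab j i = dblock (A i) j)
    (Z : Matrix (BlkIdx n) (BlkIdx n) ℝ) (j : Fin t) (i : Fin m) (r c : Fin (n j)) :
    (A i * Z - Zᵀ * A i) ⟨j, r⟩ ⟨j, c⟩
      = (Ab j i * dblock Z j - (dblock Z j)ᵀ * Ab j i) r c := by
  rw [Matrix.sub_apply, Matrix.sub_apply, Matrix.mul_apply, Matrix.mul_apply,
    Matrix.mul_apply, Matrix.mul_apply]
  congr 1
  · rw [← Finset.univ_sigma_univ, Finset.sum_sigma]
    rw [Finset.sum_eq_single j]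
    · refine Finset.sum_congr rfl fun y _ => ?_
      rw [hAb j i]
      rfl
    · intro j' _ hj'
      refine Finset.sum_eq_zero fun y _ => ?_
      rw [hA i ⟨j, r⟩ ⟨j', y⟩ (by simpa using (Ne.symm hj')), zero_mul]
    · intro h
      exact absurd (Finset.mem_univ j) h
  · rw [← Finset.univ_sigma_univ, Finset.sum_sigma]
    rw [Finset.sum_eq_single j]
    · refine Finset.sum_congr rfl fun y _ => ?_
      rw [hAb j i]
      rfl
    · intro j' _ hj'
      refine Finset.sum_eq_zero fun y _ => ?_
      rw [Matrix.transpose_apply, hA i ⟨j', y⟩ ⟨j, c⟩ (by simpa using hj'), mul_zero]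
    · intro h
      exact absurd (Finset.mem_univ j) h


/-- Lemma 4.1(b): clustering of the eigenvalues of the diagonal blocks of
`Z` around real numbers, quantified by `ω_rob`. -/
theorem eigenvalue_cluster_bound {t m : ℕ} {n : Fin t → ℕ} (hn : ∀ j, 0 < n j)
    (A : Fin m → Matrix (BlkIdx n) (BlkIdx n) ℝ) (hA : ∀ i, IsBlockDiag (A i))
    (Ab : ∀ j : Fin t, Fin m → Matrix (Fin (n j)) (Fin (n j)) ℝ)
    (hAb : ∀ j i, Ab j i = dblock (A i) j)
    (hdim : ∀ j, Module.finrank ℝ (nSubmodule (Ab j)) = 1)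
    (Z : Matrix (BlkIdx n) (BlkIdx n) ℝ)
    (R : Fin m → Matrix (BlkIdx n) (BlkIdx n) ℝ)
    (hR : ∀ i, R i = A i * Z - Zᵀ * A i) :
    ∀ j : Fin t, ∃ μhat : ℝ,
      ENNReal.ofReal
          (((eigMultiset (dblock Z j)).map fun μ => ‖μ - (μhat : ℂ)‖ ^ 2).sum) ≤
        ENNReal.ofReal (∑ i, frob (bdiag (R i)) ^ 2) / (omegaRob Ab) ^ 2 := by
  intro j
  have hnj : (0 : ℝ) < (n j : ℝ) := by exact_mod_cast hn j
  set μhat : ℝ := Matrix.trace (dblock Z j) / (n j : ℝ) with hμhat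
  refine ⟨μhat, ?_⟩
  set E : Matrix (Fin (n j)) (Fin (n j)) ℝ := dblock Z j - μhat • 1 with hEdef
  have htrE : Matrix.trace E = 0 := by
    rw [hEdef, Matrix.trace_sub, Matrix.trace_smul, Matrix.trace_one, hμhat]
    simp only [smul_eq_mul]
    field_simp
    simp [Fintype.card_fin]
  have hSchur := schur_real (dblock Z j) E μhat hEdef
  set SE : ℝ := ∑ i, ∑ k, (E i k) ^ 2 with hSE
  set Sfull : ℝ := ∑ i, frob (bdiag (R i)) ^ 2 with hSfull
  set G := Gjj (Ab j) with hG
  set x : Fin (n j) × Fin (n j) → ℝ := vecM E with hx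
  -- x ⟂ ker G
  have hker : ∀ v : Fin (n j) × Fin (n j) → ℝ, G *ᵥ v = 0 → x ⬝ᵥ v = 0 := by
    intro v hv
    set V : Matrix (Fin (n j)) (Fin (n j)) ℝ := Matrix.of fun p q => v (q, p) with hV
    have hvV : vecM V = v := rfl
    have hVmem : V ∈ nSubmodule (Ab j) := by
      intro i
      ext r c
      have h1 := gjj_mulVec (Ab j) V i c r
      rw [hvV, ← hG] at h1
      rw [hv] at h1
      rw [Matrix.zero_apply]
      exact h1.symm
    have hone : (1 : Matrix (Fin (n j)) (Fin (n j)) ℝ) ∈ nSubmodule (Ab j) := by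
      intro i
      simp
    have h1ne : (1 : Matrix (Fin (n j)) (Fin (n j)) ℝ) ≠ 0 := by
      intro h
      have := congrFun (congrFun h ⟨0, hn j⟩) ⟨0, hn j⟩
      simp [Matrix.one_apply] at this
    have hspan : Submodule.span ℝ {(1 : Matrix (Fin (n j)) (Fin (n j)) ℝ)}
        = nSubmodule (Ab j) := by
      apply Submodule.eq_of_le_of_finrank_le
      · rw [Submodule.span_singleton_le_iff_mem]
        exact hone
      · rw [hdim j, finrank_span_singleton h1ne]
    have hVspan : V ∈ Submodule.span ℝ {(1 : Matrix (Fin (n j)) (Fin (n j)) ℝ)} := by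
      rw [hspan]
      exact hVmem
    obtain ⟨s, hs⟩ := Submodule.mem_span_singleton.mp hVspan
    have hxv : x ⬝ᵥ v = s * Matrix.trace E := by
      rw [← hvV, dotProduct, ← hs]
      rw [Fintype.sum_prod_type]
      rw [Matrix.trace, Finset.mul_sum]
      refine Finset.sum_congr rfl fun c _ => ?_
      rw [Finset.sum_eq_single c]
      · show E c c * (s • (1 : Matrix (Fin (n j)) (Fin (n j)) ℝ)) c c = s * E c c
        rw [Matrix.smul_apply, Matrix.one_apply_eq]
        simp [mul_comm]
      · intro r _ hr
        show E r c * (s • (1 : Matrix (Fin (n j)) (Fin (n j)) ℝ)) r c = 0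
        rw [Matrix.smul_apply, Matrix.one_apply_ne hr]
        simp
      · intro h
        exact absurd (Finset.mem_univ c) h
    rw [hxv, htrE, mul_zero]
  -- the residual identity
  have hGx : ∀ (i : Fin m) (c r : Fin (n j)),
      (G *ᵥ x) (i, (c, r)) = R i ⟨j, r⟩ ⟨j, c⟩ := by
    intro i c r
    rw [hG, hx, gjj_mulVec]
    have hAE : Ab j i * E - Eᵀ * Ab j i
        = Ab j i * dblock Z j - (dblock Z j)ᵀ * Ab j i := by
      rw [hEdef]
      rw [Matrix.transpose_sub, Matrix.transpose_smul, Matrix.transpose_one,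
        Matrix.mul_sub, Matrix.sub_mul, Matrix.mul_smul, Matrix.smul_mul,
        Matrix.mul_one, Matrix.one_mul]
      abel
    rw [hAE, ← dblock_R A hA Ab hAb Z j i r c, hR i]
  -- norm computations
  have hxx : x ⬝ᵥ x = SE := by
    rw [dotProduct, hSE, Fintype.sum_prod_type, Finset.sum_comm]
    refine Finset.sum_congr rfl fun r _ => Finset.sum_congr rfl fun c _ => ?_
    rw [hx]
    show E r c * E r c = E r c ^ 2
    ring
  have hfrob_sq : ∀ i, frob (bdiag (R i)) ^ 2
      = ∑ p : BlkIdx n, ∑ q : BlkIdx n, (bdiag (R i) p q) ^ 2 := by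
    intro i
    rw [frob, Real.sq_sqrt]
    exact Finset.sum_nonneg fun p _ => Finset.sum_nonneg fun q _ => sq_nonneg _
  have hGxle : (G *ᵥ x) ⬝ᵥ (G *ᵥ x) ≤ Sfull := by
    rw [dotProduct, hSfull, Fintype.sum_prod_type]
    refine Finset.sum_le_sum fun i _ => ?_
    rw [hfrob_sq i]
    have hterm : ∀ p : Fin (n j) × Fin (n j),
        (G *ᵥ x) (i, p) * (G *ᵥ x) (i, p) = (R i ⟨j, p.2⟩ ⟨j, p.1⟩) ^ 2 := by
      rintro ⟨c, r⟩
      rw [hGx i c r]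
      ring
    rw [Finset.sum_congr rfl fun p _ => hterm p]
    have hsub : ∀ (xx yy : Fin (n j)), (R i ⟨j, yy⟩ ⟨j, xx⟩) ^ 2
        = (bdiag (R i) ⟨j, yy⟩ ⟨j, xx⟩) ^ 2 := by
      intro xx yy
      rw [bdiag, if_pos rfl]
    calc ∑ p : Fin (n j) × Fin (n j), (R i ⟨j, p.2⟩ ⟨j, p.1⟩) ^ 2
        = ∑ c : Fin (n j), ∑ r : Fin (n j), (bdiag (R i) ⟨j, r⟩ ⟨j, c⟩) ^ 2 := by
          rw [Fintype.sum_prod_type]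
          exact Finset.sum_congr rfl fun c _ => Finset.sum_congr rfl fun r _ => hsub c r
      _ = ∑ r : Fin (n j), ∑ c : Fin (n j), (bdiag (R i) ⟨j, r⟩ ⟨j, c⟩) ^ 2 :=
          Finset.sum_comm
      _ ≤ ∑ r : Fin (n j), ∑ q : BlkIdx n, (bdiag (R i) ⟨j, r⟩ q) ^ 2 := by
          refine Finset.sum_le_sum fun r _ => ?_
          exact sigma_sum_ge (fun q => (bdiag (R i) ⟨j, r⟩ q) ^ 2)
            (fun q => sq_nonneg _) j
      _ ≤ ∑ p : BlkIdx n, ∑ q : BlkIdx n, (bdiag (R i) p q) ^ 2 :=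
          sigma_sum_ge (fun p => ∑ q : BlkIdx n, (bdiag (R i) p q) ^ 2)
            (fun p => Finset.sum_nonneg fun q _ => sq_nonneg _) j
  have hspec := spectral_bound G x hker
  rw [hxx] at hspec
  have hSEnn : 0 ≤ SE := Finset.sum_nonneg fun i _ => Finset.sum_nonneg fun k _ => sq_nonneg _
  have hSfullnn : 0 ≤ Sfull :=
    Finset.sum_nonneg fun i _ => sq_nonneg _
  -- case analysis
  by_cases hj1 : 1 < n j
  · by_cases hσ0 : minNonzeroSV G = 0
    · -- kernel is everything, so x = 0
      have hx0 : x ⬝ᵥ x = 0 := hker x (minNonzeroSV_eq_zero_imp G hσ0 x)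
      rw [hxx] at hx0
      have : (((eigMultiset (dblock Z j)).map
          fun μ => ‖μ - (μhat : ℂ)‖ ^ 2).sum) ≤ 0 := by
        rw [show (0:ℝ) = SE from hx0.symm]
        exact hSchur
      rw [ENNReal.ofReal_eq_zero.mpr this]
      exact zero_le
    · have hσpos : 0 < minNonzeroSV G := lt_of_le_of_ne (minNonzeroSV_nonneg G) (Ne.symm hσ0)
      set σ := minNonzeroSV G with hσ
      have hSEle : SE ≤ Sfull / σ ^ 2 := by
        rw [le_div_iff₀ (by positivity)]
        calc SE * σ ^ 2 = σ ^ 2 * SE := by ring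
          _ ≤ (G *ᵥ x) ⬝ᵥ (G *ᵥ x) := hspec
          _ ≤ Sfull := hGxle
      have hchain : (((eigMultiset (dblock Z j)).map
          fun μ => ‖μ - (μhat : ℂ)‖ ^ 2).sum) ≤ Sfull / σ ^ 2 :=
        le_trans hSchur hSEle
      have step1 : ENNReal.ofReal
          (((eigMultiset (dblock Z j)).map fun μ => ‖μ - (μhat : ℂ)‖ ^ 2).sum)
          ≤ ENNReal.ofReal (Sfull / σ ^ 2) := ENNReal.ofReal_le_ofReal hchain
      have step2 : ENNReal.ofReal (Sfull / σ ^ 2)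
          = ENNReal.ofReal Sfull / (ENNReal.ofReal σ) ^ 2 := by
        rw [ENNReal.ofReal_div_of_pos (by positivity), ENNReal.ofReal_pow hσpos.le]
      have hω : omegaRob Ab ≤ ENNReal.ofReal σ := by
        rw [hσ, hG]
        exact iInf₂_le j hj1
      have hω2 : (omegaRob Ab) ^ 2 ≤ (ENNReal.ofReal σ) ^ 2 := by
        rw [pow_two, pow_two]
        exact mul_le_mul' hω hω
      have step3 : ENNReal.ofReal Sfull / (ENNReal.ofReal σ) ^ 2
          ≤ ENNReal.ofReal Sfull / (omegaRob Ab) ^ 2 :=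
        ENNReal.div_le_div_left hω2 _
      exact le_trans step1 (le_trans (le_of_eq step2) step3)
  · -- n j = 1 : the block is 1×1 and E = 0
    have hnj1 : n j = 1 := le_antisymm (not_lt.mp hj1) (hn j)
    have hsub : ∀ i k : Fin (n j), i = k := by
      intro i k
      have hi := i.2
      have hk := k.2
      exact Fin.ext (by omega)
    have i0 : Fin (n j) := ⟨0, hn j⟩
    have htr1 : Matrix.trace E = E i0 i0 := by
      rw [Matrix.trace]
      rw [show (Finset.univ : Finset (Fin (n j))) = {i0} from
        Finset.eq_singleton_iff_unique_mem.mpr ⟨Finset.mem_univ _, fun k _ => hsub k i0⟩]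
      simp [Matrix.diag]
    have hSE0 : SE = 0 := by
      rw [hSE]
      refine Finset.sum_eq_zero fun i _ => Finset.sum_eq_zero fun k _ => ?_
      rw [hsub i i0, hsub k i0, ← htr1, htrE]
      ring
    have hle0 : (((eigMultiset (dblock Z j)).map
        fun μ => ‖μ - (μhat : ℂ)‖ ^ 2).sum) ≤ 0 := by
      rw [← hSE0]
      exact hSchur
    rw [ENNReal.ofReal_eq_zero.mpr hle0]
    exact zero_le

end JBD
end
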